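/- In the Trimmed Graphical Lasso deterministic setting, under hypotheses (H1)–(H4), the error matrix satisfies ‖Δ̃‖_F ≤ 1. (Lemma 2, deterministic form.) -/

import Mathlib

open Matrix

/-- Trace inner product ⟨U,V⟩ = tr(U Vᵀ). -/
noncomputable def traceInner {p : ℕ} (U V : Matrix (Fin p) (Fin p) ℝ) : ℝ :=
  (U * Vᵀ).trace

/-- Frobenius norm. -/
noncomputable def frobNorm {p : ℕ} (U : Matrix (Fin p) (Fin p) ℝ) : ℝ :=
  Real.sqrt (∑ i, ∑ j, (U i j) ^ 2)

/-- Entrywise ℓ1 norm: ‖U‖₁ = Σ_{i,j} |U_{ij}|. -/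
noncomputable def l1Norm {p : ℕ} (U : Matrix (Fin p) (Fin p) ℝ) : ℝ :=
  ∑ i, ∑ j, |U i j|

/-- Off-diagonal entrywise ℓ1 norm: ‖U‖_{1,off} = Σ_{i≠j} |U_{ij}|. -/
noncomputable def offNorm {p : ℕ} (U : Matrix (Fin p) (Fin p) ℝ) : ℝ :=
  ∑ ij ∈ Finset.univ.filter (fun ij : Fin p × Fin p => ij.1 ≠ ij.2), |U ij.1 ij.2|

/-- Entrywise sup norm: ‖U‖_∞ = max_{i,j} |U_{ij}|. -/
noncomputable def linfNorm {p : ℕ} (U : Matrix (Fin p) (Fin p) ℝ) : ℝ :=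
  ⨆ ij : Fin p × Fin p, |U ij.1 ij.2|

section Aux

variable {p : ℕ}

lemma traceInner_eq_sum (U V : Matrix (Fin p) (Fin p) ℝ) :
    traceInner U V = ∑ i, ∑ j, U i j * V i j := by
  simp [traceInner, Matrix.trace, Matrix.diag, Matrix.mul_apply, Matrix.transpose_apply]

lemma traceInner_sub_left (U V W : Matrix (Fin p) (Fin p) ℝ) :
    traceInner (U - V) W = traceInner U W - traceInner V W := by
  simp [traceInner_eq_sum, Matrix.sub_apply, sub_mul, Finset.sum_sub_distrib]

lemma traceInner_smul_right (c : ℝ) (U V : Matrix (Fin p) (Fin p) ℝ) :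
    traceInner U (c • V) = c * traceInner U V := by
  simp [traceInner_eq_sum, Matrix.smul_apply, smul_eq_mul, Finset.mul_sum]
  congr 1; ext i; congr 1; ext j; ring

lemma l1Norm_nonneg (U : Matrix (Fin p) (Fin p) ℝ) : 0 ≤ l1Norm U :=
  Finset.sum_nonneg fun _ _ => Finset.sum_nonneg fun _ _ => abs_nonneg _

lemma frobNorm_nonneg (U : Matrix (Fin p) (Fin p) ℝ) : 0 ≤ frobNorm U :=
  Real.sqrt_nonneg _

lemma abs_traceInner_le (hp : 0 < p) (U V : Matrix (Fin p) (Fin p) ℝ) :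
    |traceInner U V| ≤ linfNorm U * l1Norm V := by
  haveI : Nonempty (Fin p) := Fin.pos_iff_nonempty.mp hp
  have hbdd : BddAbove (Set.range fun ij : Fin p × Fin p => |U ij.1 ij.2|) :=
    (Set.finite_range _).bddAbove
  have hle : ∀ i j, |U i j| ≤ linfNorm U := fun i j =>
    le_ciSup hbdd (⟨i, j⟩ : Fin p × Fin p)
  calc |traceInner U V| = |∑ i, ∑ j, U i j * V i j| := by rw [traceInner_eq_sum]
    _ ≤ ∑ i, |∑ j, U i j * V i j| := Finset.abs_sum_le_sum_abs _ _
    _ ≤ ∑ i, ∑ j, |U i j * V i j| :=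
        Finset.sum_le_sum fun i _ => Finset.abs_sum_le_sum_abs _ _
    _ ≤ ∑ i, ∑ j, linfNorm U * |V i j| := by
        refine Finset.sum_le_sum fun i _ => Finset.sum_le_sum fun j _ => ?_
        rw [abs_mul]
        exact mul_le_mul_of_nonneg_right (hle i j) (abs_nonneg _)
    _ = linfNorm U * l1Norm V := by simp [l1Norm, Finset.mul_sum]

lemma frobNorm_le_l1Norm (U : Matrix (Fin p) (Fin p) ℝ) : frobNorm U ≤ l1Norm U := by
  have e1 : (∑ i, ∑ j, (U i j) ^ 2) = ∑ ij : Fin p × Fin p, |U ij.1 ij.2| ^ 2 := by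
    rw [Fintype.sum_prod_type (f := fun ij : Fin p × Fin p => |U ij.1 ij.2| ^ 2)]
    simp [sq_abs]
  have e2 : (∑ i, ∑ j, |U i j|) = ∑ ij : Fin p × Fin p, |U ij.1 ij.2| :=
    (Fintype.sum_prod_type (f := fun ij : Fin p × Fin p => |U ij.1 ij.2|)).symm
  have h1 : (∑ i, ∑ j, (U i j) ^ 2) ≤ (∑ i, ∑ j, |U i j|) ^ 2 := by
    rw [e1, e2]
    exact Finset.sum_sq_le_sq_sum_of_nonneg fun _ _ => abs_nonneg _
  have h2 : frobNorm U ≤ Real.sqrt ((∑ i, ∑ j, |U i j|) ^ 2) := Real.sqrt_le_sqrt h1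
  have h3 : Real.sqrt ((∑ i, ∑ j, |U i j|) ^ 2) = ∑ i, ∑ j, |U i j| :=
    Real.sqrt_sq (l1Norm_nonneg U)
  exact h2.trans_eq h3

lemma frobNorm_smul (c : ℝ) (U : Matrix (Fin p) (Fin p) ℝ) :
    frobNorm (c • U) = |c| * frobNorm U := by
  have : (∑ i, ∑ j, ((c • U) i j) ^ 2) = c ^ 2 * ∑ i, ∑ j, (U i j) ^ 2 := by
    simp [Matrix.smul_apply, smul_eq_mul, mul_pow, Finset.mul_sum]
  rw [frobNorm, this, Real.sqrt_mul (sq_nonneg c), Real.sqrt_sq_eq_abs, frobNorm]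

lemma l1Norm_sub_le (A B : Matrix (Fin p) (Fin p) ℝ) :
    l1Norm (A - B) ≤ l1Norm A + l1Norm B := by
  rw [l1Norm, l1Norm, l1Norm, ← Finset.sum_add_distrib]
  refine Finset.sum_le_sum fun i _ => ?_
  rw [← Finset.sum_add_distrib]
  exact Finset.sum_le_sum fun j _ => abs_sub (A i j) (B i j)

lemma offNorm_le_l1Norm (U : Matrix (Fin p) (Fin p) ℝ) : offNorm U ≤ l1Norm U := by
  have e2 : l1Norm U = ∑ ij : Fin p × Fin p, |U ij.1 ij.2| :=
    (Fintype.sum_prod_type (f := fun ij : Fin p × Fin p => |U ij.1 ij.2|)).symm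
  rw [e2]
  exact Finset.sum_le_sum_of_subset_of_nonneg (Finset.filter_subset _ _)
    fun _ _ _ => abs_nonneg _

lemma offNorm_sub_le (A B : Matrix (Fin p) (Fin p) ℝ) :
    offNorm A - offNorm B ≤ offNorm (A - B) := by
  rw [sub_le_iff_le_add, offNorm, offNorm, offNorm, ← Finset.sum_add_distrib]
  refine Finset.sum_le_sum fun ij _ => ?_
  have : A ij.1 ij.2 = (A - B) ij.1 ij.2 + B ij.1 ij.2 := by simp
  rw [this]
  exact (abs_add_le _ _).trans (by rw [add_comm])

lemma posSemidef_diag_nonneg {M : Matrix (Fin p) (Fin p) ℝ} (hM : M.PosSemidef)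
    (i : Fin p) : 0 ≤ M i i := by
  exact hM.diag_nonneg

lemma posSemidef_trace_nonneg {M : Matrix (Fin p) (Fin p) ℝ} (hM : M.PosSemidef) :
    0 ≤ M.trace := by
  exact Finset.sum_nonneg fun i _ => posSemidef_diag_nonneg hM i

lemma posDef_smul {M : Matrix (Fin p) (Fin p) ℝ} (hM : M.PosDef) {c : ℝ} (hc : 0 < c) :
    (c • M).PosDef := by
  refine ⟨?_, fun v hv => ?_⟩
  · have := hM.1
    unfold Matrix.IsHermitian at this ⊢
    rw [Matrix.conjTranspose_smul, this]
    simp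
  · exact (hM.smul hc).2 hv

open scoped MatrixOrder in
/-- Monotonicity of the gradient of `-log det`: for positive definite `A`, `B`,
`⟨A⁻¹ - B⁻¹, B - A⟩ ≥ 0`. -/
lemma traceInner_inv_sub_inv_nonneg {A B : Matrix (Fin p) (Fin p) ℝ}
    (hA : A.PosDef) (hB : B.PosDef) :
    0 ≤ traceInner (A⁻¹ - B⁻¹) (B - A) := by
  have hAdet : IsUnit A.det := (Matrix.isUnit_iff_isUnit_det _).mp hA.isUnit
  have hBdet : IsUnit B.det := (Matrix.isUnit_iff_isUnit_det _).mp hB.isUnit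
  set C : Matrix (Fin p) (Fin p) ℝ := B - A with hC
  have key : A⁻¹ - B⁻¹ = A⁻¹ * C * B⁻¹ := by
    rw [hC, Matrix.mul_sub, Matrix.sub_mul, Matrix.mul_assoc,
      Matrix.mul_nonsing_inv B hBdet, Matrix.nonsing_inv_mul A hAdet, Matrix.mul_one,
      Matrix.one_mul]
  have hCt : Cᵀ = C := by
    have h1 : Aᵀ = A := by
      rw [← Matrix.conjTranspose_eq_transpose_of_trivial]; exact hA.1
    have h2 : Bᵀ = B := by
      rw [← Matrix.conjTranspose_eq_transpose_of_trivial]; exact hB.1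
    rw [hC, Matrix.transpose_sub, h1, h2]
  -- M = C * B⁻¹ * Cᵀ is PSD
  have hM : (C * B⁻¹ * Cᵀ).PosSemidef := by
    have := (hB.inv.posSemidef).mul_mul_conjTranspose_same C
    rwa [Matrix.conjTranspose_eq_transpose_of_trivial] at this
  -- A⁻¹ = S * S with S = sqrt
  have hAinv := hA.inv.posSemidef
  set S := CFC.sqrt A⁻¹ with hS
  have hSS : S * S = A⁻¹ := CFC.sqrt_mul_sqrt_self _ hAinv.nonneg
  have hSh : Sᵀ = S := by
    rw [← Matrix.conjTranspose_eq_transpose_of_trivial]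
    exact (CFC.sqrt_nonneg A⁻¹).posSemidef.isHermitian
  have hPSD : (S * (C * B⁻¹ * Cᵀ) * Sᵀ).PosSemidef := by
    have := hM.mul_mul_conjTranspose_same S
    rwa [Matrix.conjTranspose_eq_transpose_of_trivial] at this
  have htr : traceInner (A⁻¹ - B⁻¹) C = (S * (C * B⁻¹ * Cᵀ) * Sᵀ).trace := by
    rw [traceInner, key, hSh, ← hSS]
    have e1 : S * S * C * B⁻¹ * Cᵀ = S * (S * (C * B⁻¹ * Cᵀ)) := by
      simp only [Matrix.mul_assoc]
    rw [e1, Matrix.trace_mul_comm]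
  rw [htr]
  exact posSemidef_trace_nonneg hPSD

end Aux

set_option maxHeartbeats 400000 in
/-- Lemma 2 (deterministic form): under (H1)–(H4) the error matrix satisfies ‖Δ̃‖_F ≤ 1. -/
theorem error_frobNorm_le_one
    (p n h : ℕ) (hp : 0 < p) (hn : 0 < n) (hh : 0 < h)
    (x : Fin n → Fin p → ℝ)
    (Θstar Θtil : Matrix (Fin p) (Fin p) ℝ)
    (hΘstar : Θstar.PosDef) (hΘtil : Θtil.PosDef)
    (R : ℝ) (hR : 0 < R) (hΘstarR : l1Norm Θstar ≤ R) (hΘtilR : l1Norm Θtil ≤ R)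
    (wtil wstar : Fin n → ℝ)
    (hwtil : ∀ i, wtil i ∈ Set.Icc (0 : ℝ) 1) (hwstar : ∀ i, wstar i ∈ Set.Icc (0 : ℝ) 1)
    (κ τ₁ τ₂ lam : ℝ) (hκ : 0 < κ) (hτ₁ : 0 ≤ τ₁) (hτ₂ : 0 ≤ τ₂) (hlam : 0 < lam)
    (H1 : traceInner
        ((1 / (h : ℝ)) • ∑ i, wtil i • Matrix.vecMulVec (x i) (x i) - Θtil⁻¹)
        (Θtil - Θstar) ≤ lam * (offNorm Θstar - offNorm Θtil))
    (H2 : ∀ Δ : Matrix (Fin p) (Fin p) ℝ, Δ.IsSymm → (Θstar + Δ).PosDef →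
        frobNorm Δ ≤ 1 →
        traceInner (Θstar⁻¹ - (Θstar + Δ)⁻¹) Δ ≥ κ * (frobNorm Δ) ^ 2)
    (H3 : |traceInner
        ((1 / (h : ℝ)) • ∑ i, (wtil i - wstar i) • Matrix.vecMulVec (x i) (x i))
        (Θtil - Θstar)|
        ≤ τ₁ * frobNorm (Θtil - Θstar) + τ₂ * l1Norm (Θtil - Θstar))
    (H4a : 4 * max
        (linfNorm ((1 / (h : ℝ)) • ∑ i, wstar i • Matrix.vecMulVec (x i) (x i) - Θstar⁻¹))
        τ₂ ≤ lam)
    (H4b : lam ≤ (κ - τ₁) / (3 * R)) :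
    frobNorm (Θtil - Θstar) ≤ 1 := by
  by_contra hcon
  push_neg at hcon
  set Δ : Matrix (Fin p) (Fin p) ℝ := Θtil - Θstar with hΔ
  set F : ℝ := frobNorm Δ with hFdef
  have hF1 : 1 < F := hcon
  have hF0 : 0 < F := lt_trans one_pos hF1
  set t : ℝ := F⁻¹ with htdef
  have ht0 : 0 < t := inv_pos.mpr hF0
  have ht1 : t < 1 := by
    rw [htdef]
    exact inv_lt_one_of_one_lt₀ hF1
  -- basic norms
  set L : ℝ := l1Norm Δ with hLdef
  have hL0 : 0 ≤ L := l1Norm_nonneg Δ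
  have hL2R : L ≤ 2 * R := by
    have := l1Norm_sub_le Θtil Θstar
    rw [hLdef, hΔ]
    linarith
  have h3R : 0 < 3 * R := by linarith
  have hlam3R : 3 * lam * R ≤ κ - τ₁ := by
    have h := (le_div_iff₀ h3R).mp H4b
    linarith
  have hκτ : 0 < κ - τ₁ := lt_of_lt_of_le (by positivity) hlam3R
  -- symmetry of Δ
  have hsymmStar : Θstarᵀ = Θstar := by
    rw [← Matrix.conjTranspose_eq_transpose_of_trivial]; exact hΘstar.1
  have hsymmTil : Θtilᵀ = Θtil := by
    rw [← Matrix.conjTranspose_eq_transpose_of_trivial]; exact hΘtil.1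
  have hΔsymm : Δ.IsSymm := by
    rw [Matrix.IsSymm, hΔ, Matrix.transpose_sub, hsymmStar, hsymmTil]
  -- the intermediate matrix A = Θstar + t • Δ
  set A : Matrix (Fin p) (Fin p) ℝ := Θstar + t • Δ with hAdef
  have hAconv : A = (1 - t) • Θstar + t • Θtil := by
    rw [hAdef, hΔ, smul_sub, sub_smul, one_smul]
    abel
  have hApd : A.PosDef := by
    rw [hAconv]
    exact (posDef_smul hΘstar (by linarith)).add (posDef_smul hΘtil ht0)
  -- apply H2 to t • Δ
  have htΔsymm : (t • Δ).IsSymm := hΔsymm.smul t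
  have hfrob_tΔ : frobNorm (t • Δ) = 1 := by
    rw [frobNorm_smul, abs_of_pos ht0, ← hFdef, htdef, inv_mul_cancel₀ (ne_of_gt hF0)]
  have h2 := H2 (t • Δ) htΔsymm (by rw [← hAdef]; exact hApd) (le_of_eq hfrob_tΔ)
  rw [hfrob_tΔ] at h2
  rw [← hAdef, traceInner_smul_right] at h2
  have hlow : κ * F ≤ traceInner (Θstar⁻¹ - A⁻¹) Δ := by
    have h2' : κ ≤ t * traceInner (Θstar⁻¹ - A⁻¹) Δ := by
      simpa using h2
    have hFt : F * t = 1 := by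
      rw [htdef, mul_inv_cancel₀ (ne_of_gt hF0)]
    have h3 : F * κ ≤ F * (t * traceInner (Θstar⁻¹ - A⁻¹) Δ) :=
      mul_le_mul_of_nonneg_left h2' hF0.le
    have h4 : F * (t * traceInner (Θstar⁻¹ - A⁻¹) Δ)
        = traceInner (Θstar⁻¹ - A⁻¹) Δ := by
      rw [← mul_assoc, hFt, one_mul]
    linarith
  -- monotonicity step
  have hmono : 0 ≤ traceInner (A⁻¹ - Θtil⁻¹) Δ := by
    have hkey := traceInner_inv_sub_inv_nonneg hApd hΘtil
    have hBA : Θtil - A = (1 - t) • Δ := by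
      rw [hAdef, hΔ]
      module
    rw [hBA, traceInner_smul_right] at hkey
    have h1t : 0 < 1 - t := by linarith
    by_contra hneg
    push_neg at hneg
    nlinarith
  -- combine lower bound
  have hlow2 : κ * F ≤ traceInner (Θstar⁻¹ - Θtil⁻¹) Δ := by
    have : traceInner (Θstar⁻¹ - Θtil⁻¹) Δ
        = traceInner (Θstar⁻¹ - A⁻¹) Δ + traceInner (A⁻¹ - Θtil⁻¹) Δ := by
      rw [traceInner_sub_left, traceInner_sub_left, traceInner_sub_left]
      ring
    rw [this]
    linarith
  -- upper bound via H1, H3, H4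
  set Shat : Matrix (Fin p) (Fin p) ℝ :=
    (1 / (h : ℝ)) • ∑ i, wtil i • Matrix.vecMulVec (x i) (x i) with hShat
  set Sstar : Matrix (Fin p) (Fin p) ℝ :=
    (1 / (h : ℝ)) • ∑ i, wstar i • Matrix.vecMulVec (x i) (x i) with hSstar
  set D : Matrix (Fin p) (Fin p) ℝ :=
    (1 / (h : ℝ)) • ∑ i, (wtil i - wstar i) • Matrix.vecMulVec (x i) (x i) with hDdef
  have hD : D = Shat - Sstar := by
    rw [hDdef, hShat, hSstar, ← smul_sub, ← Finset.sum_sub_distrib]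
    congr 1
    exact Finset.sum_congr rfl fun i _ => sub_smul _ _ _
  have hdecomp : traceInner (Θstar⁻¹ - Θtil⁻¹) Δ
      = traceInner (Shat - Θtil⁻¹) Δ - traceInner D Δ
        - traceInner (Sstar - Θstar⁻¹) Δ := by
    have hEq : Θstar⁻¹ - Θtil⁻¹ = (Shat - Θtil⁻¹) - D - (Sstar - Θstar⁻¹) := by
      rw [hD]; abel
    rw [hEq]
    simp only [traceInner_sub_left]
  -- bounds on each term
  have hmax1 : linfNorm (Sstar - Θstar⁻¹) ≤ lam / 4 := by
    have h := le_max_left (linfNorm (Sstar - Θstar⁻¹)) τ₂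
    linarith [H4a]
  have hmax2 : τ₂ ≤ lam / 4 := by
    have h := le_max_right (linfNorm (Sstar - Θstar⁻¹)) τ₂
    linarith [H4a]
  have hT1 : traceInner (Shat - Θtil⁻¹) Δ ≤ lam * L := by
    have hoff : offNorm Θstar - offNorm Θtil ≤ L := by
      have h1 := offNorm_sub_le Θstar Θtil
      have h2 : offNorm (Θstar - Θtil) = offNorm Δ := by
        rw [hΔ, offNorm, offNorm]
        exact Finset.sum_congr rfl fun ij _ => by
          rw [Matrix.sub_apply, Matrix.sub_apply, abs_sub_comm]
      have h3 := offNorm_le_l1Norm Δ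
      rw [h2] at h1
      rw [hLdef]
      linarith
    calc traceInner (Shat - Θtil⁻¹) Δ ≤ lam * (offNorm Θstar - offNorm Θtil) := H1
      _ ≤ lam * L := mul_le_mul_of_nonneg_left hoff (le_of_lt hlam)
  have hT2 : traceInner D Δ ≥ -(τ₁ * F + τ₂ * L) := by
    linarith [neg_abs_le (traceInner D Δ), H3]
  have hT3 : traceInner (Sstar - Θstar⁻¹) Δ ≥ -(lam / 4 * L) := by
    have habs := abs_traceInner_le hp (Sstar - Θstar⁻¹) Δ
    have hbound : |traceInner (Sstar - Θstar⁻¹) Δ| ≤ lam / 4 * L := by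
      calc |traceInner (Sstar - Θstar⁻¹) Δ| ≤ linfNorm (Sstar - Θstar⁻¹) * L := by
            rw [hLdef]; exact habs
        _ ≤ lam / 4 * L := mul_le_mul_of_nonneg_right hmax1 hL0
    linarith [neg_abs_le (traceInner (Sstar - Θstar⁻¹) Δ), hbound]
  -- put it together
  have hup : traceInner (Θstar⁻¹ - Θtil⁻¹) Δ ≤ τ₁ * F + (3 / 2) * lam * L := by
    rw [hdecomp]
    have : τ₂ * L ≤ lam / 4 * L := mul_le_mul_of_nonneg_right hmax2 hL0
    linarith
  have hfinal : κ * F ≤ τ₁ * F + (κ - τ₁) := by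
    have h1 : (3 / 2) * lam * L ≤ (3 / 2) * lam * (2 * R) := by
      have : 0 ≤ (3 / 2) * lam := by linarith
      exact mul_le_mul_of_nonneg_left hL2R this
    have h2 : (3 / 2) * lam * (2 * R) = 3 * lam * R := by ring
    linarith
  nlinarith [mul_pos hκτ (by linarith : (0:ℝ) < F - 1)]
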